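/- arXiv:2504.12625 — 3 statements merged into one kernel-verified Lean document; each statement's English description precedes it below -/
import Mathlib

section
/- For positive self-adjoint operators A and B on a Hilbert space and any s in [0,1], the operator norm satisfies ‖A^s B^s‖ ≤ ‖AB‖^s (the Cordes inequality). -/
open scoped NNReal ENNReal
open Filter

namespace CordesAux

variable {H : Type*} [NormedAddCommGroup H] [InnerProductSpace ℂ H] [CompleteSpace H]

set_option linter.unusedSectionVars false
set_option linter.unusedVariables false

lemma sr_comm (a b : H →L[ℂ] H) :
    spectralRadius ℂ (a * b) = spectralRadius ℂ (b * a) := by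
  have key : ∀ c : H →L[ℂ] H,
      spectralRadius ℂ c = ⨆ k ∈ spectrum ℂ c \ {0}, (‖k‖₊ : ℝ≥0∞) := by
    intro c
    rw [spectralRadius]
    apply le_antisymm
    · refine iSup₂_le fun k hk => ?_
      rcases eq_or_ne k 0 with rfl | h
      · simp
      · exact le_iSup₂ (f := fun k _ => (‖k‖₊ : ℝ≥0∞)) k ⟨hk, h⟩
    · exact iSup₂_le fun k hk => le_iSup₂ (f := fun k _ => (‖k‖₊ : ℝ≥0∞)) k hk.1
  rw [key, key, spectrum.nonzero_mul_comm]

lemma nnnorm_eq_sr {a : H →L[ℂ] H} (ha : 0 ≤ a) :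
    (‖a‖₊ : ℝ≥0∞) = spectralRadius ℂ a :=
  (IsSelfAdjoint.of_nonneg ha).spectralRadius_eq_nnnorm.symm

lemma rpow_add_nn (a : H →L[ℂ] H) (ha : 0 ≤ a) {x y : ℝ} (hx : 0 ≤ x) (hy : 0 ≤ y) :
    CFC.rpow a (x + y) = CFC.rpow a x * CFC.rpow a y := by
  simp only [CFC.rpow_eq_pow, CFC.rpow_def]
  rw [← cfc_mul _ _ a]
  exact cfc_congr fun z _ => z.rpow_add_of_nonneg hx hy

set_option maxHeartbeats 1000000 in
lemma nnnorm_rpow_le [Nontrivial H] (a : H →L[ℂ] H) (ha : 0 ≤ a) {x : ℝ} (hx : 0 ≤ x) :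
    ‖CFC.rpow a x‖₊ ≤ ‖a‖₊ ^ x := by
  rw [CFC.rpow_eq_pow, CFC.rpow_def]
  refine nnnorm_cfc_nnreal_le fun z hz => ?_
  refine NNReal.rpow_le_rpow ?_ hx
  have h1 : ((z : ℝ)) ∈ spectrum ℝ a := spectrum.algebraMap_mem ℝ hz
  have h2 := spectrum.norm_le_norm_of_mem h1
  rw [← NNReal.coe_le_coe, coe_nnnorm]
  simpa using h2

set_option maxHeartbeats 1000000 in
lemma key [Nontrivial H] (A B : H →L[ℂ] H) (hA : 0 ≤ A) (hB : 0 ≤ B)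
    {s t : ℝ} (hs : 0 ≤ s) (ht : 0 ≤ t) :
    ‖CFC.rpow A ((s + t) / 2) * CFC.rpow B ((s + t) / 2)‖₊ ^ 2
      ≤ ‖CFC.rpow A s * CFC.rpow B s‖₊ * ‖CFC.rpow A t * CFC.rpow B t‖₊ := by
  set u : ℝ := (s + t) / 2 with hu_def
  have hu : 0 ≤ u := by positivity
  set Au := CFC.rpow A u with hAu_def
  set Bu := CFC.rpow B u with hBu_def
  set As := CFC.rpow A s with hAs_def
  set Bs := CFC.rpow B s with hBs_def
  set At := CFC.rpow A t with hAt_def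
  set Bt := CFC.rpow B t with hBt_def
  have hAu0 : 0 ≤ Au := CFC.rpow_nonneg
  have hBu0 : 0 ≤ Bu := CFC.rpow_nonneg
  have hAs0 : 0 ≤ As := CFC.rpow_nonneg
  have hBs0 : 0 ≤ Bs := CFC.rpow_nonneg
  have hAt0 : 0 ≤ At := CFC.rpow_nonneg
  have hBt0 : 0 ≤ Bt := CFC.rpow_nonneg
  -- step 1: square is a star-mul-self
  have hstar : star (Au * Bu) = Bu * Au := by
    rw [star_mul, (IsSelfAdjoint.of_nonneg hAu0).star_eq, (IsSelfAdjoint.of_nonneg hBu0).star_eq]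
  have hsq : ‖Au * Bu‖₊ ^ 2 = ‖Bu * Au * (Au * Bu)‖₊ := by
    rw [sq, ← CStarRing.nnnorm_star_mul_self (x := Au * Bu), hstar]
  have hT0 : 0 ≤ Bu * Au * (Au * Bu) := by
    rw [← hstar]; exact star_mul_self_nonneg _
  -- step 2: exponent arithmetic
  have hAu2 : Au * Au = As * At := by
    rw [hAu_def, hAs_def, hAt_def, ← rpow_add_nn A hA hu hu, ← rpow_add_nn A hA hs ht]
    congr 1
    rw [hu_def]; ring
  have hBu2 : Bu * Bu = Bt * Bs := by
    rw [hBu_def, hBt_def, hBs_def, ← rpow_add_nn B hB hu hu, ← rpow_add_nn B hB ht hs]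
    congr 1
    rw [hu_def]; ring
  -- step 3: the spectral radius chain
  have echain : (‖Bu * Au * (Au * Bu)‖₊ : ℝ≥0∞)
      ≤ (‖At * Bt‖₊ : ℝ≥0∞) * ‖Bs * As‖₊ := by
    calc (‖Bu * Au * (Au * Bu)‖₊ : ℝ≥0∞)
        = spectralRadius ℂ (Bu * (Au * Au * Bu)) := by
          rw [nnnorm_eq_sr hT0]; exact congrArg _ (by simp only [mul_assoc])
      _ = spectralRadius ℂ (Au * Au * Bu * Bu) := sr_comm _ _
      _ = spectralRadius ℂ (As * (At * Bt * Bs)) := by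
          congr 1
          calc Au * Au * Bu * Bu = (Au * Au) * (Bu * Bu) := by simp only [mul_assoc]
            _ = (As * At) * (Bt * Bs) := by rw [hAu2, hBu2]
            _ = As * (At * Bt * Bs) := by simp only [mul_assoc]
      _ = spectralRadius ℂ (At * Bt * Bs * As) := sr_comm _ _
      _ = spectralRadius ℂ ((At * Bt) * (Bs * As)) := by
          exact congrArg _ (by simp only [mul_assoc])
      _ ≤ (‖(At * Bt) * (Bs * As)‖₊ : ℝ≥0∞) := spectrum.spectralRadius_le_nnnorm (𝕜 := ℂ) _
      _ ≤ (‖At * Bt‖₊ : ℝ≥0∞) * ‖Bs * As‖₊ := by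
          rw [← ENNReal.coe_mul]
          exact_mod_cast nnnorm_mul_le _ _
  have echain' : ‖Bu * Au * (Au * Bu)‖₊ ≤ ‖At * Bt‖₊ * ‖Bs * As‖₊ := by
    exact_mod_cast echain
  have hBsAs : ‖Bs * As‖₊ = ‖As * Bs‖₊ := by
    rw [← nnnorm_star (As * Bs), star_mul, (IsSelfAdjoint.of_nonneg hAs0).star_eq,
      (IsSelfAdjoint.of_nonneg hBs0).star_eq]
  rw [hsq]
  calc ‖Bu * Au * (Au * Bu)‖₊ ≤ ‖At * Bt‖₊ * ‖Bs * As‖₊ := echain'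
    _ = ‖As * Bs‖₊ * ‖At * Bt‖₊ := by rw [hBsAs, mul_comm]

lemma dyadic [Nontrivial H] (A B : H →L[ℂ] H) (hA : 0 ≤ A) (hB : 0 ≤ B) :
    ∀ n k : ℕ, k ≤ 2 ^ n →
      ‖CFC.rpow A ((k : ℝ) / 2 ^ n) * CFC.rpow B ((k : ℝ) / 2 ^ n)‖₊
        ≤ ‖A * B‖₊ ^ ((k : ℝ) / 2 ^ n) := by
  intro n
  induction n with
  | zero =>
    intro k hk
    interval_cases k
    · simp only [Nat.cast_zero, pow_zero, zero_div, NNReal.rpow_zero]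
      simp only [CFC.rpow_eq_pow] at *
      rw [CFC.rpow_zero A hA, CFC.rpow_zero B hB, mul_one, nnnorm_one]
    · simp only [Nat.cast_one, pow_zero, div_one, NNReal.rpow_one]
      simp only [CFC.rpow_eq_pow] at *
      rw [CFC.rpow_one A hA, CFC.rpow_one B hB]
  | succ n ih =>
    intro k hk
    rcases Nat.eq_zero_or_pos k with rfl | hkpos
    · simp only [Nat.cast_zero, zero_div, NNReal.rpow_zero]
      simp only [CFC.rpow_eq_pow] at *
      rw [CFC.rpow_zero A hA, CFC.rpow_zero B hB, mul_one, nnnorm_one]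
    · set a : ℕ := k / 2 with ha_def
      set b : ℕ := k - a with hb_def
      have hab : a + b = k := by omega
      have ha2 : a ≤ 2 ^ n := by
        have : 2 ^ (n + 1) = 2 * 2 ^ n := by ring
        omega
      have hb2 : b ≤ 2 ^ n := by
        have : 2 ^ (n + 1) = 2 * 2 ^ n := by ring
        omega
      have habR : (a : ℝ) + (b : ℝ) = (k : ℝ) := by exact_mod_cast congrArg (Nat.cast : ℕ → ℝ) hab
      have hmid : ((k : ℝ) / 2 ^ (n + 1)) = (((a : ℝ) / 2 ^ n) + ((b : ℝ) / 2 ^ n)) / 2 := by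
        rw [← habR]
        have h2 : (2 : ℝ) ^ (n + 1) = 2 ^ n * 2 := by ring
        rw [h2]; ring
      rw [hmid]
      have hkey := key A B hA hB (s := (a : ℝ) / 2 ^ n) (t := (b : ℝ) / 2 ^ n)
        (by positivity) (by positivity)
      have h1 := ih a ha2
      have h2 := ih b hb2
      have hcomb := hkey.trans (mul_le_mul' h1 h2)
      have hc : ‖A * B‖₊ ^ ((a : ℝ) / 2 ^ n) * ‖A * B‖₊ ^ ((b : ℝ) / 2 ^ n)
          = (‖A * B‖₊ ^ (((((a : ℝ) / 2 ^ n) + ((b : ℝ) / 2 ^ n))) / 2)) ^ 2 := by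
        rw [← NNReal.rpow_add_of_nonneg _ (by positivity) (by positivity),
          ← NNReal.rpow_natCast (‖A * B‖₊ ^ (((((a : ℝ) / 2 ^ n) + ((b : ℝ) / 2 ^ n))) / 2)) 2,
          ← NNReal.rpow_mul]
        congr 1
        push_cast
        ring
      rw [hc] at hcomb
      exact le_of_pow_le_pow_left₀ two_ne_zero zero_le hcomb

end CordesAux

/-- **Cordes inequality**: for positive (self-adjoint) bounded operators `A`, `B`
on a complex Hilbert space and `s ∈ [0,1]`, one has `‖A^s * B^s‖ ≤ ‖A * B‖ ^ s`,
where the real powers are taken via the continuous functional calculus. -/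
theorem cordes_inequality {H : Type*} [NormedAddCommGroup H] [InnerProductSpace ℂ H]
    [CompleteSpace H] (A B : H →L[ℂ] H) (hA : 0 ≤ A) (hB : 0 ≤ B)
    {s : ℝ} (hs0 : 0 ≤ s) (hs1 : s ≤ 1) :
    ‖CFC.rpow A s * CFC.rpow B s‖ ≤ ‖A * B‖ ^ s := by
  rcases subsingleton_or_nontrivial H with hH | hH
  · have h0 : CFC.rpow A s * CFC.rpow B s = 0 := Subsingleton.elim _ _
    rw [h0, norm_zero]
    exact Real.rpow_nonneg (norm_nonneg _) s
  rcases eq_or_lt_of_le hs0 with hs | hs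
  · rw [← hs, Real.rpow_zero, show CFC.rpow A 0 = A ^ (0 : ℝ) from rfl,
      show CFC.rpow B 0 = B ^ (0 : ℝ) from rfl, CFC.rpow_zero A hA, CFC.rpow_zero B hB,
      mul_one, norm_one]
  -- main case : 0 < s ≤ 1
  set c : ℝ≥0 := ‖A * B‖₊ with hc_def
  set k : ℕ → ℕ := fun n => ⌊s * 2 ^ n⌋₊ with hk_def
  set σ : ℕ → ℝ := fun n => (k n : ℝ) / 2 ^ n with hσ_def
  set δ : ℕ → ℝ := fun n => s - σ n with hδ_def
  have hk_le : ∀ n, k n ≤ 2 ^ n := by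
    intro n
    have h1 : s * 2 ^ n ≤ (2 : ℝ) ^ n := by
      have : (0:ℝ) < 2 ^ n := by positivity
      nlinarith
    calc k n ≤ ⌊(2 : ℝ) ^ n⌋₊ := Nat.floor_le_floor h1
      _ = 2 ^ n := by
          rw [show ((2 : ℝ) ^ n) = ((2 ^ n : ℕ) : ℝ) by push_cast; ring, Nat.floor_natCast]
  have hσ_nonneg : ∀ n, 0 ≤ σ n := fun n => by positivity
  have hσ_le : ∀ n, σ n ≤ s := by
    intro n
    rw [hσ_def, div_le_iff₀ (by positivity)]
    exact Nat.floor_le (by positivity)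
  have hδ_nonneg : ∀ n, 0 ≤ δ n := fun n => sub_nonneg.2 (hσ_le n)
  have hδ_le : ∀ n, δ n ≤ (1 / 2 : ℝ) ^ n := by
    intro n
    have h1 : s * 2 ^ n < (k n : ℝ) + 1 := Nat.lt_floor_add_one _
    have h2 : (0:ℝ) < 2 ^ n := by positivity
    rw [hδ_def, hσ_def]
    simp only
    rw [sub_le_iff_le_add, div_pow, one_pow]
    rw [← add_div, le_div_iff₀ h2]  -- might not be exact; fix below
    nlinarith
  -- the per-n bound
  have bnd : ∀ n, ‖CFC.rpow A s * CFC.rpow B s‖₊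
      ≤ ‖A‖₊ ^ (δ n) * c ^ (σ n) * ‖B‖₊ ^ (δ n) := by
    intro n
    have hδ0 := hδ_nonneg n
    have hσ0 := hσ_nonneg n
    have hdecompA : CFC.rpow A s = CFC.rpow A (δ n) * CFC.rpow A (σ n) := by
      rw [← CordesAux.rpow_add_nn A hA hδ0 hσ0]
      congr 1
      rw [hδ_def]; ring
    have hdecompB : CFC.rpow B s = CFC.rpow B (σ n) * CFC.rpow B (δ n) := by
      rw [← CordesAux.rpow_add_nn B hB hσ0 hδ0]
      congr 1
      rw [hδ_def]; ring
    have hd : ∀ m : ℕ, m ≤ 2 ^ m → True := fun _ _ => trivial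
    calc ‖CFC.rpow A s * CFC.rpow B s‖₊
        = ‖CFC.rpow A (δ n) * (CFC.rpow A (σ n) * CFC.rpow B (σ n)) * CFC.rpow B (δ n)‖₊ := by
          rw [hdecompA, hdecompB]
          exact congrArg _ (by simp only [mul_assoc])
      _ ≤ ‖CFC.rpow A (δ n) * (CFC.rpow A (σ n) * CFC.rpow B (σ n))‖₊ * ‖CFC.rpow B (δ n)‖₊ :=
          nnnorm_mul_le _ _
      _ ≤ ‖CFC.rpow A (δ n)‖₊ * ‖CFC.rpow A (σ n) * CFC.rpow B (σ n)‖₊ * ‖CFC.rpow B (δ n)‖₊ :=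
          mul_le_mul_left (nnnorm_mul_le _ _) _
      _ ≤ ‖A‖₊ ^ (δ n) * c ^ (σ n) * ‖B‖₊ ^ (δ n) := by
          refine mul_le_mul' (mul_le_mul' (CordesAux.nnnorm_rpow_le A hA hδ0) ?_) (CordesAux.nnnorm_rpow_le B hB hδ0)
          exact CordesAux.dyadic A B hA hB n (k n) (hk_le n)
  rcases eq_or_ne c 0 with hc | hc
  · -- A * B = 0 : pick n with k n ≥ 1
    obtain ⟨n, hn⟩ := pow_unbounded_of_one_lt (1 / s) (one_lt_two (α := ℝ))
    have h1 : (1 : ℝ) ≤ s * 2 ^ n := by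
      rw [div_lt_iff₀ hs] at hn
      nlinarith
    have hkn : 1 ≤ k n := Nat.le_floor (by exact_mod_cast h1)
    have hσpos : 0 < σ n := by
      rw [hσ_def]
      have : (0:ℝ) < (k n : ℝ) := by exact_mod_cast hkn
      positivity
    have hb := bnd n
    rw [hc, NNReal.zero_rpow (ne_of_gt hσpos), mul_zero, zero_mul] at hb
    have hzero : ‖CFC.rpow A s * CFC.rpow B s‖₊ = 0 := le_antisymm hb zero_le
    rw [show ‖CFC.rpow A s * CFC.rpow B s‖ = ((‖CFC.rpow A s * CFC.rpow B s‖₊ : ℝ≥0) : ℝ) from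
      (coe_nnnorm _).symm, hzero]
    simpa using Real.rpow_nonneg (norm_nonneg (A * B)) s
  · -- c > 0
    have hcpos : (0 : ℝ) < (c : ℝ) := by
      exact_mod_cast hc.bot_lt
    have hApos : (0 : ℝ) < ‖A‖ := by
      rcases eq_or_lt_of_le (norm_nonneg A) with h | h
      · exfalso
        apply hc
        rw [hc_def]
        have : A = 0 := by rwa [eq_comm, norm_eq_zero] at h
        simp [this]
      · exact h
    have hBpos : (0 : ℝ) < ‖B‖ := by
      rcases eq_or_lt_of_le (norm_nonneg B) with h | h
      · exfalso
        apply hc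
        rw [hc_def]
        have : B = 0 := by rwa [eq_comm, norm_eq_zero] at h
        simp [this]
      · exact h
    have bndR : ∀ n, ‖CFC.rpow A s * CFC.rpow B s‖ ≤
        ‖A‖ ^ (δ n) * (c : ℝ) ^ (σ n) * ‖B‖ ^ (δ n) := by
      intro n
      have h := NNReal.coe_le_coe.mpr (bnd n)
      push_cast [NNReal.coe_rpow] at h
      simpa using h
    have hδ_t : Tendsto δ atTop (nhds 0) :=
      squeeze_zero hδ_nonneg hδ_le
        (tendsto_pow_atTop_nhds_zero_of_lt_one (by norm_num) (by norm_num))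
    have hσ_t : Tendsto σ atTop (nhds s) := by
      have h : Tendsto (fun n => s - δ n) atTop (nhds (s - 0)) := tendsto_const_nhds.sub hδ_t
      have he : (fun n => s - δ n) = σ := by
        funext n
        rw [hδ_def]; ring
      rw [he] at h
      simpa using h
    have lA : Tendsto (fun n => ‖A‖ ^ (δ n)) atTop (nhds 1) := by
      have := (Real.continuousAt_const_rpow (a := ‖A‖) (b := 0) (ne_of_gt hApos)).tendsto.comp hδ_t
      simpa [Real.rpow_zero, Function.comp_def] using this
    have lB : Tendsto (fun n => ‖B‖ ^ (δ n)) atTop (nhds 1) := by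
      have := (Real.continuousAt_const_rpow (a := ‖B‖) (b := 0) (ne_of_gt hBpos)).tendsto.comp hδ_t
      simpa [Real.rpow_zero, Function.comp_def] using this
    have lC : Tendsto (fun n => (c : ℝ) ^ (σ n)) atTop (nhds ((c : ℝ) ^ s)) := by
      exact (Real.continuousAt_const_rpow (a := (c : ℝ)) (b := s) (ne_of_gt hcpos)).tendsto.comp hσ_t
    have hT : Tendsto (fun n => ‖A‖ ^ (δ n) * (c : ℝ) ^ (σ n) * ‖B‖ ^ (δ n)) atTop
        (nhds ((c : ℝ) ^ s)) := by
      have := (lA.mul lC).mul lB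
      simpa using this
    have hfinal := ge_of_tendsto' hT bndR
    have hcc : (c : ℝ) = ‖A * B‖ := by rw [hc_def, coe_nnnorm]
    rwa [hcc] at hfinal
end

section
/- Let g_λ : (0,U] → ℝ be a filter function satisfying sup_{0<u≤U} |1 − g_λ(u)u| u^ν ≤ γ_ν λ^ν for all 0 < ν ≤ ν_g and sup_{0<u≤U}|g_λ(u)u| ≤ b, sup_{0<u≤U}|g_λ(u)| ≤ b/λ. Then for any positive self-adjoint operator T with ‖T‖ ≤ U and any 0 < t ≤ ν_g, ‖(g_λ(T)T − I)(λI + T)^t‖ ≤ 2^t (b + 1 + γ_t) λ^t. -/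
/-- For a filter function `g = g_λ` with qualification `ν_g` and constants `b`, `γ_ν`,
and a positive operator `T` with `‖T‖ ≤ U`, one has for every `0 < t ≤ ν_g`:
`‖(g(T) T − I) (λI + T)^t‖ ≤ 2^t (b + 1 + γ_t) λ^t`. -/
theorem filter_function_operator_bound {H : Type*} [NormedAddCommGroup H]
    [InnerProductSpace ℂ H] [CompleteSpace H]
    (T : H →L[ℂ] H) (hT : 0 ≤ T) {U : ℝ} (hU : 0 < U) (hTU : ‖T‖ ≤ U)
    (g : ℝ → ℝ) (hgcont : ContinuousOn g (Set.Icc 0 U))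
    {lam b νg : ℝ} (hlam : lam ∈ Set.Ioc 0 U) (hb : 0 < b) (hνg : (1:ℝ)/2 ≤ νg)
    (hg1 : ∀ u ∈ Set.Ioc (0:ℝ) U, |g u| ≤ b / lam)
    (hg2 : ∀ u ∈ Set.Ioc (0:ℝ) U, |g u * u| ≤ b)
    (γ : ℝ → ℝ) (hγ : ∀ ν ∈ Set.Ioc (0:ℝ) νg, 0 < γ ν)
    (hg3 : ∀ ν ∈ Set.Ioc (0:ℝ) νg, ∀ u ∈ Set.Ioc (0:ℝ) U,
      |1 - g u * u| * u ^ ν ≤ γ ν * lam ^ ν)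
    {t : ℝ} (ht : t ∈ Set.Ioc (0:ℝ) νg) :
    ‖(cfc g T * T - 1) * CFC.rpow (lam • (1 : H →L[ℂ] H) + T) t‖
      ≤ (2:ℝ) ^ t * (b + 1 + γ t) * lam ^ t := by
  have hγt : 0 < γ t := hγ t ht
  have hlam0 : 0 < lam := hlam.1
  have ht0 : 0 < t := ht.1
  have hc : (0:ℝ) ≤ (2:ℝ) ^ t * (b + 1 + γ t) * lam ^ t := by positivity
  obtain hsub | hnt := subsingleton_or_nontrivial H
  · have : Subsingleton (H →L[ℂ] H) := inferInstance
    rw [Subsingleton.elim ((cfc g T * T - 1) * CFC.rpow (lam • (1 : H →L[ℂ] H) + T) t) 0,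
      norm_zero]
    exact hc
  -- nontrivial case
  have hTsa : IsSelfAdjoint T := .of_nonneg hT
  have hspec : spectrum ℝ T ⊆ Set.Icc 0 U := fun x hx =>
    ⟨spectrum_nonneg_of_nonneg hT hx,
      (le_abs_self x).trans ((spectrum.norm_le_norm_of_mem hx).trans hTU)⟩
  have haff : ContinuousOn (fun u : ℝ => lam + u) (spectrum ℝ T) := by fun_prop
  have h2 : lam • (1 : H →L[ℂ] H) + T = cfc (fun u : ℝ => lam + u) T := by
    rw [cfc_const_add lam (fun u => u) T (by fun_prop) hTsa, cfc_id' ℝ T,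
      Algebra.algebraMap_eq_smul_one]
  have hA : (0 : H →L[ℂ] H) ≤ lam • (1 : H →L[ℂ] H) + T := by
    rw [h2]
    exact cfc_nonneg fun x hx => by linarith [(hspec hx).1]
  have hrpow : ContinuousOn (fun x : ℝ => x ^ t) ((fun u : ℝ => lam + u) '' spectrum ℝ T) :=
    fun x _ => (Real.continuousAt_rpow_const x t (Or.inr ht0.le)).continuousWithinAt
  have h1 : CFC.rpow (lam • (1 : H →L[ℂ] H) + T) t
      = cfc (fun u : ℝ => (lam + u) ^ t) T := by
    rw [CFC.rpow, cfc_nnreal_eq_real _ _ hA,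
      cfc_congr (g := fun x : ℝ => x ^ t) (fun x hx => by
        have hx0 : 0 ≤ x := spectrum_nonneg_of_nonneg hA hx
        simp [Real.coe_toNNReal x hx0]),
      h2, ← cfc_comp' (fun x : ℝ => x ^ t) (fun u : ℝ => lam + u) T hrpow haff hTsa]
  have hgspec : ContinuousOn g (spectrum ℝ T) := hgcont.mono hspec
  have h4 : cfc g T * T - 1 = cfc (fun u : ℝ => g u * u - 1) T := by
    rw [cfc_sub (fun u : ℝ => g u * u) (fun _ => 1) T (hgspec.mul (by fun_prop)) (by fun_prop),
      cfc_mul g (fun u => u) T hgspec (by fun_prop), cfc_id' ℝ T, cfc_const 1 T hTsa, map_one]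
  have hrc : ContinuousOn (fun u : ℝ => (lam + u) ^ t) (spectrum ℝ T) :=
    hrpow.comp haff (Set.mapsTo_image _ _)
  rw [h1, h4, ← cfc_mul (fun u : ℝ => g u * u - 1) (fun u : ℝ => (lam + u) ^ t) T
    ((hgspec.mul (by fun_prop)).sub (by fun_prop)) hrc]
  refine norm_cfc_le hc fun x hx => ?_
  obtain ⟨hx0, hxU⟩ := hspec hx
  have h2t : (0:ℝ) < (2:ℝ) ^ t := Real.rpow_pos_of_pos (by norm_num) t
  have hlt : (0:ℝ) < lam ^ t := Real.rpow_pos_of_pos hlam0 t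
  rw [Real.norm_eq_abs, abs_mul, abs_of_nonneg (Real.rpow_nonneg (by linarith) t)]
  rcases le_or_gt x lam with hxl | hxl
  · -- x ≤ lam
    have hb1 : |g x * x - 1| ≤ b + 1 := by
      rcases eq_or_lt_of_le hx0 with h0 | h0
      · simp [← h0]; linarith
      · calc |g x * x - 1| ≤ |g x * x| + 1 := by
              have := abs_sub (g x * x) 1
              calc |g x * x - 1| ≤ |g x * x| + |(1:ℝ)| := abs_sub _ _
                _ = |g x * x| + 1 := by norm_num
          _ ≤ b + 1 := by linarith [hg2 x ⟨h0, hxU⟩]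
    have hpow : (lam + x) ^ t ≤ (2:ℝ) ^ t * lam ^ t := by
      rw [← Real.mul_rpow (by norm_num) hlam0.le]
      exact Real.rpow_le_rpow (by linarith) (by linarith) ht0.le
    calc |g x * x - 1| * (lam + x) ^ t ≤ (b + 1) * ((2:ℝ) ^ t * lam ^ t) :=
          mul_le_mul hb1 hpow (Real.rpow_nonneg (by linarith) t) (by linarith)
      _ ≤ (2:ℝ) ^ t * (b + 1 + γ t) * lam ^ t := by nlinarith
  · -- lam < x
    have hx0' : 0 < x := lt_trans hlam0 hxl
    have hpow : (lam + x) ^ t ≤ (2:ℝ) ^ t * x ^ t := by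
      rw [← Real.mul_rpow (by norm_num) hx0'.le]
      exact Real.rpow_le_rpow (by linarith) (by linarith) ht0.le
    have hkey : |g x * x - 1| * x ^ t ≤ γ t * lam ^ t := by
      rw [abs_sub_comm]
      exact hg3 t ht x ⟨hx0', hxU⟩
    calc |g x * x - 1| * (lam + x) ^ t ≤ |g x * x - 1| * ((2:ℝ) ^ t * x ^ t) :=
          mul_le_mul_of_nonneg_left hpow (abs_nonneg _)
      _ = (2:ℝ) ^ t * (|g x * x - 1| * x ^ t) := by ring
      _ ≤ (2:ℝ) ^ t * (γ t * lam ^ t) := by nlinarith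
      _ ≤ (2:ℝ) ^ t * (b + 1 + γ t) * lam ^ t := by nlinarith
end

section
/- Let g_λ be a filter function with qualification ν_g ≥ r ≥ 1/2 and constants b, γ_ν, and let T, L be positive self-adjoint operators with spectra in [0,U], λ ∈ (0,U]. Then ‖(λI + T)^{1/2}(g_λ(T)T − I) L^{r−1/2}‖ ≤ 2^r(b+1+γ_r) λ^r ‖(λI+T)^{-1}(λI+L)‖^{r−1/2} whenever 1/2 ≤ r ≤ 3/2. -/
open scoped NNReal
open NormedSpace Complex.HadamardThreeLines

set_option maxHeartbeats 1000000

section FFIBHelpers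
variable {H : Type*} [NormedAddCommGroup H] [InnerProductSpace ℂ H] [CompleteSpace H]

noncomputable instance FFIB.ratNormedAlgebra : NormedAlgebra ℚ (H →L[ℂ] H) :=
  NormedAlgebra.restrictScalars ℚ ℂ _


lemma FFIB.rpow_eq_cfc_real (X : H →L[ℂ] H) (hX : 0 ≤ X) (s : ℝ) :
    CFC.rpow X s = cfc (fun u : ℝ => u ^ s) X := by
  rw [CFC.rpow_eq_pow, CFC.rpow_def, cfc_nnreal_eq_real (fun x : ℝ≥0 => x ^ s) X hX]
  refine cfc_congr fun x hx => ?_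
  have hx0 : 0 ≤ x := spectrum_nonneg_of_nonneg hX hx
  simp [NNReal.coe_rpow, Real.coe_toNNReal x hx0]

lemma FFIB.exp_real_smul_log (A : H →L[ℂ] H) (hA : 0 ≤ A)
    (hAs : ∀ x ∈ spectrum ℝ A, 0 < x) (w : ℝ) :
    exp (w • CFC.log A) = cfc (fun u : ℝ => u ^ w) A := by
  have hsa : IsSelfAdjoint A := .of_nonneg hA
  have hlogc : ContinuousOn Real.log (spectrum ℝ A) :=
    continuousOn_of_forall_continuousAt fun x hx => Real.continuousAt_log (hAs x hx).ne'
  have h1 : w • CFC.log A = cfc (fun u : ℝ => w * Real.log u) A := by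
    rw [CFC.log, ← cfc_smul w Real.log A hlogc]; simp [smul_eq_mul]
  have hsa2 : IsSelfAdjoint (cfc (fun u : ℝ => w * Real.log u) A) := cfc_predicate _ A
  rw [h1, ← CFC.real_exp_eq_normedSpace_exp hsa2,
    ← cfc_comp' Real.exp (fun u : ℝ => w * Real.log u) A (by fun_prop)
      (by fun_prop (disch := exact fun x hx => (hAs x hx).ne'))]
  exact cfc_congr fun x hx => by rw [Real.rpow_def_of_pos (hAs x hx)]; ring_nf

lemma FFIB.exp_ofReal_smul (S : H →L[ℂ] H) (x : ℝ) :
    exp ((x : ℂ) • S) = exp (x • S) := by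
  rw [← algebraMap_smul ℂ x S]
  rfl

lemma FFIB.exp_smul_split (S : H →L[ℂ] H) (z : ℂ) :
    exp (z • S) = exp ((z.re : ℂ) • S) * exp (((z.im : ℂ) * Complex.I) • S) := by
  rw [← exp_add_of_commute (((Commute.refl S).smul_left _).smul_right _), ← add_smul,
    Complex.re_add_im]

lemma FFIB.exp_smul_split' (S : H →L[ℂ] H) (z : ℂ) :
    exp (z • S) = exp (((z.im : ℂ) * Complex.I) • S) * exp ((z.re : ℂ) • S) := by
  rw [← exp_add_of_commute (((Commute.refl S).smul_left _).smul_right _), ← add_smul,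
    add_comm, Complex.re_add_im]

lemma FFIB.norm_exp_I_smul [Nontrivial H] (S : H →L[ℂ] H) (hS : IsSelfAdjoint S) (y : ℝ) :
    ‖exp (((y : ℂ) * Complex.I) • S)‖ = 1 := by
  have hmem : exp (((y : ℂ) * Complex.I) • S) ∈ unitary (H →L[ℂ] H) := by
    apply exp_mem_unitary_of_mem_skewAdjoint
    rw [skewAdjoint.mem_iff, star_smul, hS.star_eq]
    simp [← neg_smul]
  exact CStarRing.norm_coe_unitary ⟨_, hmem⟩

lemma FFIB.norm_exp_real_smul_le [Nontrivial H] (S : H →L[ℂ] H) (hS : IsSelfAdjoint S)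
    {x : ℝ} (hx : |x| ≤ 1) : ‖exp (x • S)‖ ≤ Real.exp ‖S‖ := by
  have hsa : IsSelfAdjoint (x • S) := IsSelfAdjoint.smul (star_trivial x) hS
  rw [← CFC.real_exp_eq_normedSpace_exp hsa]
  refine norm_cfc_le (Real.exp_nonneg _) fun v hv => ?_
  have h1 : ‖v‖ ≤ ‖x • S‖ := spectrum.norm_le_norm_of_mem hv
  rw [norm_smul] at h1
  have h2 : v ≤ ‖S‖ := by
    calc v ≤ |v| := le_abs_self v
    _ ≤ ‖x‖ * ‖S‖ := h1
    _ ≤ 1 * ‖S‖ := by gcongr; exact hx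
    _ = ‖S‖ := one_mul _
  rw [Real.norm_eq_abs, abs_of_pos (Real.exp_pos v)]
  exact Real.exp_le_exp.2 h2

/-- Cordes-type interpolation inequality. -/
lemma FFIB.interp (A B : H →L[ℂ] H) (hA : 0 ≤ A) (hB : 0 ≤ B)
    (hAs : ∀ x ∈ spectrum ℝ A, 0 < x) (hBs : ∀ x ∈ spectrum ℝ B, 0 < x)
    {t : ℝ} (ht0 : 0 ≤ t) (ht1 : t ≤ 1) :
    ‖CFC.rpow A (-t) * CFC.rpow B t‖ ≤ ‖Ring.inverse A * B‖ ^ t := by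
  rcases subsingleton_or_nontrivial H with hH | hH
  · have : Subsingleton (H →L[ℂ] H) := inferInstance
    simp only [Subsingleton.elim (CFC.rpow A (-t) * CFC.rpow B t) 0, norm_zero]
    positivity
  have hsaLA : IsSelfAdjoint (CFC.log A) := IsSelfAdjoint.log
  have hsaLB : IsSelfAdjoint (CFC.log B) := IsSelfAdjoint.log
  set S₁ : H →L[ℂ] H := -CFC.log A with hS₁
  set S₂ : H →L[ℂ] H := CFC.log B with hS₂
  have hsaS₁ : IsSelfAdjoint S₁ := hsaLA.neg
  have hsaS₂ : IsSelfAdjoint S₂ := hsaLB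
  set F : ℂ → (H →L[ℂ] H) := fun z => exp (z • S₁) * exp (z • S₂) with hF
  -- evaluation at real points
  have hev1 : ∀ x : ℝ, exp ((x : ℂ) • S₁) = cfc (fun u : ℝ => u ^ (-x)) A := by
    intro x
    rw [hS₁, smul_neg, ← neg_smul, ← Complex.ofReal_neg, FFIB.exp_ofReal_smul,
      FFIB.exp_real_smul_log A hA hAs]
  have hev2 : ∀ x : ℝ, exp ((x : ℂ) • S₂) = cfc (fun u : ℝ => u ^ x) B := by
    intro x
    rw [hS₂, FFIB.exp_ofReal_smul, FFIB.exp_real_smul_log B hB hBs]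
  -- differentiability
  have hdiff : Differentiable ℂ F := fun z =>
    ((hasDerivAt_exp_smul_const S₁ z).differentiableAt.mul
      (hasDerivAt_exp_smul_const S₂ z).differentiableAt)
  -- boundedness on the strip
  have hbdd : BddAbove (norm ∘ F '' verticalClosedStrip 0 1) := by
    refine ⟨Real.exp ‖S₁‖ * Real.exp ‖S₂‖, ?_⟩
    rintro - ⟨z, hz, rfl⟩
    have hzre : z.re ∈ Set.Icc (0:ℝ) 1 := hz
    have key : ∀ S : H →L[ℂ] H, IsSelfAdjoint S → ‖exp (z • S)‖ ≤ Real.exp ‖S‖ := by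
      intro S hS
      rw [FFIB.exp_smul_split S z]
      calc ‖exp ((z.re : ℂ) • S) * exp (((z.im : ℂ) * Complex.I) • S)‖
          ≤ ‖exp ((z.re : ℂ) • S)‖ * ‖exp (((z.im : ℂ) * Complex.I) • S)‖ := norm_mul_le _ _
        _ = ‖exp (z.re • S)‖ * 1 := by
            rw [FFIB.exp_ofReal_smul, FFIB.norm_exp_I_smul S hS]
        _ ≤ Real.exp ‖S‖ * 1 := by
            gcongr
            exact FFIB.norm_exp_real_smul_le S hS (abs_le.2 ⟨by linarith [hzre.1], hzre.2⟩)
        _ = Real.exp ‖S‖ := mul_one _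
    calc (norm ∘ F) z ≤ ‖exp (z • S₁)‖ * ‖exp (z • S₂)‖ := norm_mul_le _ _
      _ ≤ Real.exp ‖S₁‖ * Real.exp ‖S₂‖ := by
          gcongr <;> [exact key S₁ hsaS₁; exact key S₂ hsaS₂]
  -- boundary at Re = 0
  have hbd0 : ∀ z ∈ Complex.re ⁻¹' {0}, ‖F z‖ ≤ 1 := by
    intro z hz
    have hzre : z.re = 0 := hz
    have e1 : z • S₁ = ((z.im : ℂ) * Complex.I) • S₁ := by
      nth_rw 1 [← Complex.re_add_im z, hzre]; norm_num
    have e2 : z • S₂ = ((z.im : ℂ) * Complex.I) • S₂ := by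
      nth_rw 1 [← Complex.re_add_im z, hzre]; norm_num
    calc ‖F z‖ ≤ ‖exp (z • S₁)‖ * ‖exp (z • S₂)‖ := norm_mul_le _ _
      _ = 1 := by rw [e1, e2, FFIB.norm_exp_I_smul S₁ hsaS₁, FFIB.norm_exp_I_smul S₂ hsaS₂,
            one_mul]
  -- boundary at Re = 1
  have hbd1 : ∀ z ∈ Complex.re ⁻¹' {1}, ‖F z‖ ≤ ‖Ring.inverse A * B‖ := by
    intro z hz
    have hzre : z.re = 1 := hz
    have hC₁ : exp ((z.re : ℂ) • S₁) = Ring.inverse A := by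
      have h0A : (0:ℝ) ∉ spectrum ℝ A := fun h => absurd (hAs 0 h) (lt_irrefl 0)
      have huA : IsUnit A := spectrum.zero_notMem_iff ℝ |>.1 h0A
      rw [hzre, hev1 1, ← FFIB.rpow_eq_cfc_real A hA (-1)]
      lift A to (H →L[ℂ] H)ˣ using huA with Au
      rw [CFC.rpow_eq_pow, CFC.rpow_neg_one_eq_inv Au hA, Ring.inverse_unit]
    have hC₂ : exp ((z.re : ℂ) • S₂) = B := by
      rw [hzre, hev2 1, ← FFIB.rpow_eq_cfc_real B hB 1, CFC.rpow_eq_pow, CFC.rpow_one B hB]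
    calc ‖F z‖ = ‖exp (((z.im:ℂ) * Complex.I) • S₁) *
          (exp ((z.re:ℂ) • S₁) * exp ((z.re:ℂ) • S₂)) *
          exp (((z.im:ℂ) * Complex.I) • S₂)‖ := by
          rw [hF]; simp only; rw [FFIB.exp_smul_split' S₁ z, FFIB.exp_smul_split S₂ z]
          noncomm_ring
      _ ≤ ‖exp (((z.im:ℂ) * Complex.I) • S₁) *
            (exp ((z.re:ℂ) • S₁) * exp ((z.re:ℂ) • S₂))‖ *
            ‖exp (((z.im:ℂ) * Complex.I) • S₂)‖ := norm_mul_le _ _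
      _ ≤ ‖exp (((z.im:ℂ) * Complex.I) • S₁)‖ *
            ‖exp ((z.re:ℂ) • S₁) * exp ((z.re:ℂ) • S₂)‖ *
            ‖exp (((z.im:ℂ) * Complex.I) • S₂)‖ := by
          gcongr; exact norm_mul_le _ _
      _ = ‖Ring.inverse A * B‖ := by
          rw [FFIB.norm_exp_I_smul S₁ hsaS₁, FFIB.norm_exp_I_smul S₂ hsaS₂, hC₁, hC₂]
          ring
  -- apply Hadamard
  have hmem : (t : ℂ) ∈ verticalClosedStrip 0 1 := by
    simp only [verticalClosedStrip, Set.mem_preimage, Complex.ofReal_re]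
    exact ⟨ht0, ht1⟩
  have := Complex.HadamardThreeLines.norm_le_interp_of_mem_verticalClosedStrip' (f := F) zero_lt_one hmem
    (hdiff.diffContOnCl) hbdd hbd0 hbd1
  rw [Complex.ofReal_re, Real.one_rpow, sub_zero, sub_zero, div_one] at this
  calc ‖CFC.rpow A (-t) * CFC.rpow B t‖ = ‖F (t : ℂ)‖ := by
        rw [hF]; simp only
        rw [hev1 t, hev2 t, FFIB.rpow_eq_cfc_real A hA, FFIB.rpow_eq_cfc_real B hB]
      _ ≤ 1 * ‖Ring.inverse A * B‖ ^ t := this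
      _ = ‖Ring.inverse A * B‖ ^ t := one_mul _


lemma FFIB.scalar_est {U lam b r : ℝ} (g γ : ℝ → ℝ)
    (hlam : lam ∈ Set.Ioc 0 U) (hb : 0 < b)
    (hg2 : ∀ u ∈ Set.Ioc (0:ℝ) U, |g u * u| ≤ b)
    (hγr : 0 < γ r)
    (hg3 : ∀ u ∈ Set.Ioc (0:ℝ) U, |1 - g u * u| * u ^ r ≤ γ r * lam ^ r)
    (hr1 : (1:ℝ)/2 ≤ r) (hr2 : r ≤ 3/2) {u : ℝ} (hu : u ∈ Set.Icc 0 U) :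
    |(lam + u) ^ ((1:ℝ)/2) * (g u * u - 1) * (lam + u) ^ (r - 1/2)|
      ≤ 2 ^ r * (b + 1 + γ r) * lam ^ r := by
  have hr0 : (0:ℝ) ≤ r := by linarith
  have hlu : 0 < lam + u := by have := hlam.1; have := hu.1; linarith
  have habs : |(lam + u) ^ ((1:ℝ)/2) * (g u * u - 1) * (lam + u) ^ (r - 1/2)|
      = (lam + u) ^ r * |g u * u - 1| := by
    rw [abs_mul, abs_mul, abs_of_nonneg (Real.rpow_nonneg hlu.le _),
      abs_of_nonneg (Real.rpow_nonneg hlu.le _), mul_right_comm, ← Real.rpow_add hlu]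
    norm_num
  rw [habs]
  rcases eq_or_lt_of_le hu.1 with hu0 | hu0
  · -- u = 0
    rw [← hu0]
    simp only [mul_zero, zero_sub, abs_neg, abs_one, add_zero, mul_one]
    have h2r : (1:ℝ) ≤ 2 ^ r := Real.one_le_rpow (by norm_num) hr0
    have hlr : 0 < lam ^ r := Real.rpow_pos_of_pos hlam.1 r
    have h1 : (1:ℝ) ≤ 2 ^ r * (b + 1 + γ r) := by nlinarith
    calc lam ^ r = 1 * lam ^ r := (one_mul _).symm
      _ ≤ 2 ^ r * (b + 1 + γ r) * lam ^ r := mul_le_mul_of_nonneg_right h1 hlr.le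
  · -- u > 0
    have huU : u ∈ Set.Ioc (0:ℝ) U := ⟨hu0, hu.2⟩
    have h1 : (lam + u) ^ r ≤ 2 ^ r * (lam ^ r + u ^ r) := by
      have hm : lam + u ≤ 2 * max lam u := by
        rcases le_total lam u with h | h
        · rw [max_eq_right h]; linarith
        · rw [max_eq_left h]; linarith
      have hmax0 : (0:ℝ) ≤ max lam u := le_trans hlam.1.le (le_max_left _ _)
      calc (lam + u) ^ r ≤ (2 * max lam u) ^ r :=
            Real.rpow_le_rpow hlu.le hm hr0
        _ = 2 ^ r * (max lam u) ^ r := Real.mul_rpow (by norm_num) hmax0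
        _ ≤ 2 ^ r * (lam ^ r + u ^ r) := by
            gcongr
            rcases le_total lam u with h | h
            · rw [max_eq_right h]
              exact le_add_of_nonneg_left (Real.rpow_nonneg hlam.1.le _)
            · rw [max_eq_left h]
              exact le_add_of_nonneg_right (Real.rpow_nonneg hu.1 _)
    have h2 : |g u * u - 1| ≤ b + 1 := by
      calc |g u * u - 1| ≤ |g u * u| + |1| := abs_sub _ _
        _ ≤ b + 1 := by rw [abs_one]; gcongr; exact hg2 u huU
    have h3 : u ^ r * |g u * u - 1| ≤ γ r * lam ^ r := by
      rw [mul_comm, abs_sub_comm]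
      exact hg3 u huU
    have habs0 : (0:ℝ) ≤ |g u * u - 1| := abs_nonneg _
    have hlr : (0:ℝ) ≤ lam ^ r := Real.rpow_nonneg hlam.1.le _
    have h2r : (0:ℝ) ≤ 2 ^ r := Real.rpow_nonneg (by norm_num) _
    calc (lam + u) ^ r * |g u * u - 1| ≤ (2 ^ r * (lam ^ r + u ^ r)) * |g u * u - 1| :=
          mul_le_mul_of_nonneg_right h1 habs0
      _ = 2 ^ r * (lam ^ r * |g u * u - 1| + u ^ r * |g u * u - 1|) := by ring
      _ ≤ 2 ^ r * (lam ^ r * (b + 1) + γ r * lam ^ r) := by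
          gcongr
      _ = 2 ^ r * (b + 1 + γ r) * lam ^ r := by ring

lemma FFIB.scalar_est3 {lam t v : ℝ} (hlam : 0 < lam) (ht0 : 0 ≤ t) (hv : 0 ≤ v) :
    |(lam + v) ^ (-t) * v ^ t| ≤ 1 := by
  have hlv : 0 < lam + v := by linarith
  rw [abs_of_nonneg (mul_nonneg (Real.rpow_nonneg hlv.le _) (Real.rpow_nonneg hv _)),
    Real.rpow_neg hlv.le, inv_mul_eq_div, div_le_one (Real.rpow_pos_of_pos hlv t)]
  exact Real.rpow_le_rpow hv (by linarith) ht0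

lemma FFIB.smul_one_add_eq_cfc (X : H →L[ℂ] H) (hX : 0 ≤ X) (lam : ℝ) :
    lam • (1 : H →L[ℂ] H) + X = cfc (fun u : ℝ => lam + u) X := by
  have := cfc_const_add (R := ℝ) lam id X (by fun_prop) (IsSelfAdjoint.of_nonneg hX)
  simp only [id_eq] at this
  rw [this, cfc_id ℝ X, Algebra.algebraMap_eq_smul_one]


end FFIBHelpers


/-- For a filter function `g = g_λ` with qualification `ν_g ≥ r` and constants `b`, `γ_ν`,
and positive operators `T`, `L` with spectra in `[0,U]`, `λ ∈ (0,U]`, and `1/2 ≤ r ≤ 3/2`: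
`‖(λI+T)^{1/2} (g(T)T − I) L^{r−1/2}‖ ≤ 2^r (b+1+γ_r) λ^r ‖(λI+T)^{-1}(λI+L)‖^{r−1/2}`. -/
theorem filter_function_intermediate_bound {H : Type*} [NormedAddCommGroup H]
    [InnerProductSpace ℂ H] [CompleteSpace H]
    (T L : H →L[ℂ] H) (hT : 0 ≤ T) (hL : 0 ≤ L) {U : ℝ} (hU : 0 < U)
    (hTU : ‖T‖ ≤ U) (hLU : ‖L‖ ≤ U)
    (g : ℝ → ℝ) (hgcont : ContinuousOn g (Set.Icc 0 U))
    {lam b νg : ℝ} (hlam : lam ∈ Set.Ioc 0 U) (hb : 0 < b)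
    (hg1 : ∀ u ∈ Set.Ioc (0:ℝ) U, |g u| ≤ b / lam)
    (hg2 : ∀ u ∈ Set.Ioc (0:ℝ) U, |g u * u| ≤ b)
    (γ : ℝ → ℝ) (hγ : ∀ ν ∈ Set.Ioc (0:ℝ) νg, 0 < γ ν)
    (hg3 : ∀ ν ∈ Set.Ioc (0:ℝ) νg, ∀ u ∈ Set.Ioc (0:ℝ) U,
      |1 - g u * u| * u ^ ν ≤ γ ν * lam ^ ν)
    {r : ℝ} (hr1 : (1:ℝ)/2 ≤ r) (hr2 : r ≤ 3/2) (hrν : r ≤ νg) :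
    ‖CFC.rpow (lam • (1 : H →L[ℂ] H) + T) ((1:ℝ)/2) * (cfc g T * T - 1)
        * CFC.rpow L (r - 1/2)‖
      ≤ (2:ℝ) ^ r * (b + 1 + γ r) * lam ^ r
          * ‖Ring.inverse (lam • (1 : H →L[ℂ] H) + T)
              * (lam • (1 : H →L[ℂ] H) + L)‖ ^ (r - 1/2) := by
  have hγr : 0 < γ r := hγ r ⟨by linarith, hrν⟩
  have hlam0 : 0 < lam := hlam.1
  have h2r : (0:ℝ) ≤ 2 ^ r := Real.rpow_nonneg (by norm_num) _
  have hlr : (0:ℝ) ≤ lam ^ r := Real.rpow_nonneg hlam0.le _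
  have hK0 : (0:ℝ) ≤ 2 ^ r * (b + 1 + γ r) * lam ^ r := by
    apply mul_nonneg (mul_nonneg h2r (by linarith)) hlr
  rcases subsingleton_or_nontrivial H with hH | hH
  · have : Subsingleton (H →L[ℂ] H) := inferInstance
    rw [Subsingleton.elim (CFC.rpow (lam • (1 : H →L[ℂ] H) + T) ((1:ℝ)/2) *
      (cfc g T * T - 1) * CFC.rpow L (r - 1/2)) 0, norm_zero]
    exact mul_nonneg hK0 (Real.rpow_nonneg (norm_nonneg _) _)
  -- basic facts
  have hsaT : IsSelfAdjoint T := .of_nonneg hT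
  have hsaL : IsSelfAdjoint L := .of_nonneg hL
  have hσT : spectrum ℝ T ⊆ Set.Icc 0 U := fun x hx =>
    ⟨spectrum_nonneg_of_nonneg hT hx,
     le_trans (le_trans (le_abs_self x) (spectrum.norm_le_norm_of_mem hx)) hTU⟩
  have hσL : spectrum ℝ L ⊆ Set.Icc 0 U := fun x hx =>
    ⟨spectrum_nonneg_of_nonneg hL hx,
     le_trans (le_trans (le_abs_self x) (spectrum.norm_le_norm_of_mem hx)) hLU⟩
  set A : H →L[ℂ] H := lam • (1 : H →L[ℂ] H) + T with hA
  set B : H →L[ℂ] H := lam • (1 : H →L[ℂ] H) + L with hB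
  set t : ℝ := r - 1/2 with ht
  have ht0 : 0 ≤ t := by rw [ht]; linarith
  have ht1 : t ≤ 1 := by rw [ht]; linarith
  have hsm : (0:H →L[ℂ] H) ≤ lam • 1 := by
    have e : lam • (1:H →L[ℂ] H) = star (Real.sqrt lam • 1) * (Real.sqrt lam • 1) := by
      rw [star_smul, star_one, smul_mul_smul_comm, one_mul, star_trivial,
        Real.mul_self_sqrt hlam0.le]
    rw [e]; exact star_mul_self_nonneg _
  have hA0 : 0 ≤ A := add_nonneg hsm hT
  have hB0 : 0 ≤ B := add_nonneg hsm hL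
  have hAcfc : A = cfc (fun u : ℝ => lam + u) T := FFIB.smul_one_add_eq_cfc T hT lam
  have hBcfc : B = cfc (fun u : ℝ => lam + u) L := FFIB.smul_one_add_eq_cfc L hL lam
  have hσA : spectrum ℝ A = (fun u : ℝ => lam + u) '' spectrum ℝ T := by
    rw [hAcfc]; exact cfc_map_spectrum _ T
  have hσB : spectrum ℝ B = (fun u : ℝ => lam + u) '' spectrum ℝ L := by
    rw [hBcfc]; exact cfc_map_spectrum _ L
  have hAs : ∀ x ∈ spectrum ℝ A, 0 < x := by
    rw [hσA]; rintro x ⟨u, hu, rfl⟩; have := (hσT hu).1; show 0 < lam + u; linarith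
  have hBs : ∀ x ∈ spectrum ℝ B, 0 < x := by
    rw [hσB]; rintro x ⟨u, hu, rfl⟩; have := (hσL hu).1; show 0 < lam + u; linarith
  -- continuity helpers
  have hrpow_cont : ∀ (s : ℝ) (X : H →L[ℂ] H), (∀ x ∈ spectrum ℝ X, (0:ℝ) ≤ x) →
      ContinuousOn (fun u : ℝ => (lam + u) ^ s) (spectrum ℝ X) := by
    intro s X hX
    refine continuousOn_of_forall_continuousAt fun x hx => ?_
    have h1 : (0:ℝ) < lam + x := by have := hX x hx; linarith
    exact (Real.continuousAt_rpow_const _ s (Or.inl h1.ne')).comp (by fun_prop)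
  have hcg : ContinuousOn g (spectrum ℝ T) := hgcont.mono hσT
  -- rpow of A as cfc of T
  have hArpow : ∀ s : ℝ, CFC.rpow A s = cfc (fun u : ℝ => (lam + u) ^ s) T := by
    intro s
    rw [FFIB.rpow_eq_cfc_real A hA0 s, hAcfc,
      ← cfc_comp' (fun u : ℝ => u ^ s) (fun u : ℝ => lam + u) T
        (by rw [← hσA]; exact continuousOn_of_forall_continuousAt fun x hx =>
          Real.continuousAt_rpow_const _ s (Or.inl (hAs x hx).ne'))
        (by fun_prop)]
  have hBrpow : ∀ s : ℝ, CFC.rpow B s = cfc (fun u : ℝ => (lam + u) ^ s) L := by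
    intro s
    rw [FFIB.rpow_eq_cfc_real B hB0 s, hBcfc,
      ← cfc_comp' (fun u : ℝ => u ^ s) (fun u : ℝ => lam + u) L
        (by rw [← hσB]; exact continuousOn_of_forall_continuousAt fun x hx =>
          Real.continuousAt_rpow_const _ s (Or.inl (hBs x hx).ne'))
        (by fun_prop)]
  -- Factor 1
  have hF1 : CFC.rpow A ((1:ℝ)/2) * (cfc g T * T - 1) * CFC.rpow A t
      = cfc (fun u : ℝ => (lam + u) ^ ((1:ℝ)/2) * (g u * u - 1) * (lam + u) ^ t) T := by
    have hD : cfc g T * T - 1 = cfc (fun u : ℝ => g u * u - 1) T := by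
      rw [cfc_sub (fun u : ℝ => g u * u) (fun _ : ℝ => 1) T
        (by exact hcg.mul (by fun_prop)) (by fun_prop),
        cfc_mul g (fun u : ℝ => u) T hcg (by fun_prop), cfc_id' ℝ T, cfc_const 1 T, map_one]
    rw [cfc_mul _ _ T (by exact ((hrpow_cont _ T (fun x hx => (hσT hx).1)).mul
        ((hcg.mul (by fun_prop)).sub (by fun_prop)))) (hrpow_cont _ T (fun x hx => (hσT hx).1)),
      cfc_mul (fun u : ℝ => (lam + u) ^ ((1:ℝ)/2)) (fun u : ℝ => g u * u - 1) T
        (hrpow_cont _ T (fun x hx => (hσT hx).1))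
        ((hcg.mul (by fun_prop)).sub (by fun_prop)),
      hArpow, hArpow, hD]
  -- Factor 3
  have hF3 : CFC.rpow B (-t) * CFC.rpow L t
      = cfc (fun v : ℝ => (lam + v) ^ (-t) * v ^ t) L := by
    rw [cfc_mul _ _ L (hrpow_cont _ L (fun x hx => (hσL hx).1))
        (by exact continuousOn_of_forall_continuousAt fun x hx =>
          Real.continuousAt_rpow_const _ t (Or.inr ht0)),
      hBrpow, FFIB.rpow_eq_cfc_real L hL t]
  -- norm bounds
  have hN1 : ‖CFC.rpow A ((1:ℝ)/2) * (cfc g T * T - 1) * CFC.rpow A t‖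
      ≤ 2 ^ r * (b + 1 + γ r) * lam ^ r := by
    rw [hF1]
    exact norm_cfc_le hK0 fun u hu => FFIB.scalar_est g γ hlam hb hg2 hγr
      (fun v hv => hg3 r ⟨by linarith, hrν⟩ v hv) hr1 hr2 (hσT hu)
  have hN3 : ‖CFC.rpow B (-t) * CFC.rpow L t‖ ≤ 1 := by
    rw [hF3]
    exact norm_cfc_le zero_le_one fun v hv => FFIB.scalar_est3 hlam0 ht0 (hσL hv).1
  have hN2 : ‖CFC.rpow A (-t) * CFC.rpow B t‖ ≤ ‖Ring.inverse A * B‖ ^ t :=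
    FFIB.interp A B hA0 hB0 hAs hBs ht0 ht1
  -- factorization
  have huA : IsUnit A := spectrum.zero_notMem_iff ℝ |>.1 fun h => absurd (hAs 0 h) (lt_irrefl 0)
  have huB : IsUnit B := spectrum.zero_notMem_iff ℝ |>.1 fun h => absurd (hBs 0 h) (lt_irrefl 0)
  have h1 : CFC.rpow A t * CFC.rpow A (-t) = 1 := by
    rw [CFC.rpow_eq_pow, CFC.rpow_eq_pow]
    exact CFC.rpow_mul_rpow_neg t (huA.isStrictlyPositive hA0)
  have h2 : CFC.rpow B t * CFC.rpow B (-t) = 1 := by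
    rw [CFC.rpow_eq_pow, CFC.rpow_eq_pow]
    exact CFC.rpow_mul_rpow_neg t (huB.isStrictlyPositive hB0)
  have hsplit : (CFC.rpow A ((1:ℝ)/2) * (cfc g T * T - 1) * CFC.rpow A t)
        * (CFC.rpow A (-t) * CFC.rpow B t) * (CFC.rpow B (-t) * CFC.rpow L t)
      = CFC.rpow A ((1:ℝ)/2) * (cfc g T * T - 1) * CFC.rpow L t := by
    have hassoc : (CFC.rpow A ((1:ℝ)/2) * (cfc g T * T - 1) * CFC.rpow A t)
        * (CFC.rpow A (-t) * CFC.rpow B t) * (CFC.rpow B (-t) * CFC.rpow L t)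
      = CFC.rpow A ((1:ℝ)/2) * (cfc g T * T - 1) *
          ((CFC.rpow A t * CFC.rpow A (-t)) * ((CFC.rpow B t * CFC.rpow B (-t))
            * CFC.rpow L t)) := by
      simp only [mul_assoc]
    rw [hassoc, h1, h2, one_mul, one_mul]
  calc ‖CFC.rpow A ((1:ℝ)/2) * (cfc g T * T - 1) * CFC.rpow L t‖
      = ‖(CFC.rpow A ((1:ℝ)/2) * (cfc g T * T - 1) * CFC.rpow A t)
        * (CFC.rpow A (-t) * CFC.rpow B t) * (CFC.rpow B (-t) * CFC.rpow L t)‖ :=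
        (congrArg norm hsplit).symm
    _ ≤ ‖CFC.rpow A ((1:ℝ)/2) * (cfc g T * T - 1) * CFC.rpow A t‖
        * ‖CFC.rpow A (-t) * CFC.rpow B t‖ * ‖CFC.rpow B (-t) * CFC.rpow L t‖ :=
        le_trans (norm_mul_le _ _) (by gcongr; exact norm_mul_le _ _)
    _ ≤ (2 ^ r * (b + 1 + γ r) * lam ^ r) * ‖Ring.inverse A * B‖ ^ t * 1 := by
        gcongr
    _ = 2 ^ r * (b + 1 + γ r) * lam ^ r * ‖Ring.inverse A * B‖ ^ t := by ring
end
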